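/- Let G be a finite abelian group, p a prime, and P a Sylow p-subgroup of G. Let X be a subgroup of G contained in P with |X| = p such that X is a maximal cyclic subgroup of P, i.e., every cyclic subgroup of P containing X is equal to X. Then X has a complement in G: there exists a subgroup H of G with X ∩ H = 1 and XH = G. -/
import Mathlib

-- step lemma: pull a complement back from a quotient
lemma step_pullback {G : Type u} [CommGroup G] (X N : Subgroup G)
    (hXN : X ⊓ N = ⊥) (H' : Subgroup (G ⧸ N))
    (h1 : X.map (QuotientGroup.mk' N) ⊓ H' = ⊥)
    (h2 : X.map (QuotientGroup.mk' N) ⊔ H' = ⊤) :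
    ∃ H : Subgroup G, X ⊓ H = ⊥ ∧ X ⊔ H = ⊤ := by
  refine ⟨H'.comap (QuotientGroup.mk' N), ?_, ?_⟩
  · rw [eq_bot_iff]
    rintro g ⟨hgX, hgH⟩
    have hmem : (QuotientGroup.mk' N) g ∈ X.map (QuotientGroup.mk' N) ⊓ H' :=
      ⟨⟨g, hgX, rfl⟩, hgH⟩
    rw [h1] at hmem
    have : g ∈ N := by
      rw [Subgroup.mem_bot] at hmem
      rwa [← QuotientGroup.eq_one_iff]
    have : g ∈ X ⊓ N := ⟨hgX, this⟩
    rw [hXN] at this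
    exact this
  · rw [eq_top_iff]
    intro g _
    have : (QuotientGroup.mk' N) g ∈ X.map (QuotientGroup.mk' N) ⊔ H' := by
      rw [h2]; trivial
    rw [Subgroup.mem_sup] at this
    obtain ⟨y, hy, z, hz, hyz⟩ := this
    obtain ⟨x, hx, rfl⟩ := hy
    have : (QuotientGroup.mk' N) (x⁻¹ * g) ∈ H' := by
      rw [map_mul, map_inv]
      rw [← hyz]
      group
      simpa using hz
    have : g = x * (x⁻¹ * g) := by group
    rw [this]
    exact Subgroup.mul_mem_sup hx ‹(QuotientGroup.mk' N) (x⁻¹ * g) ∈ H'›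


lemma pow_zpow_comm {G : Type u} [Group G] (w : G) (k : ℤ) (p : ℕ) :
    (w ^ k) ^ p = (w ^ p) ^ k := by
  rw [← zpow_natCast (w ^ k) p, ← zpow_mul, mul_comm, zpow_mul, zpow_natCast]

lemma aux_complement (p : ℕ) [Fact p.Prime] :
    ∀ (n : ℕ) (G : Type u) [CommGroup G] [Finite G], Nat.card G ≤ n →
    ∀ X : Subgroup G, (∀ g : G, g ^ p ∈ X → g ^ p = 1) →
    ∃ H : Subgroup G, X ⊓ H = ⊥ ∧ X ⊔ H = ⊤ := by
  intro n
  induction n with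
  | zero =>
    intro G _ _ hcard X _
    have := Nat.card_pos (α := G)
    omega
  | succ n ih =>
    intro G _ _ hcard X hpure
    by_cases h1 : ∃ w : G, w ^ p ≠ 1
    · obtain ⟨w, hw⟩ := h1
      set N := Subgroup.zpowers (w ^ p) with hN
      have hNbot : N ≠ ⊥ := by
        intro h
        have hm := Subgroup.mem_zpowers (w ^ p)
        rw [← hN, h, Subgroup.mem_bot] at hm
        exact hw hm
      have hXN : X ⊓ N = ⊥ := by
        rw [eq_bot_iff]
        rintro g ⟨hgX, k, hk⟩
        simp only at hk
        have hk' : (w ^ (k : ℤ)) ^ p = g := by rw [pow_zpow_comm, hk]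
        have := hpure (w ^ (k : ℤ)) (by rw [hk']; exact hgX)
        rw [Subgroup.mem_bot, ← hk', this]
      -- quotient hypothesis
      have hq : ∀ g : G ⧸ N, g ^ p ∈ X.map (QuotientGroup.mk' N) → g ^ p = 1 := by
        intro gq hgq
        obtain ⟨g, rfl⟩ := QuotientGroup.mk'_surjective N gq
        obtain ⟨x, hx, hxeq⟩ := hgq
        rw [← map_pow] at hxeq
        have hmem : x⁻¹ * g ^ p ∈ N := by
          rw [QuotientGroup.mk'_apply, QuotientGroup.mk'_apply, QuotientGroup.eq] at hxeq
          exact hxeq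
        obtain ⟨k, hk⟩ := hmem
        simp only at hk
        have hk' : (w ^ (k : ℤ)) ^ p = x⁻¹ * g ^ p := by rw [pow_zpow_comm, hk]
        have hgw : (g * (w ^ (k : ℤ))⁻¹) ^ p = x := by
          rw [mul_pow, inv_pow, hk']
          group
        have hx1 : x = 1 := by rw [← hgw]; exact hpure _ (by rw [hgw]; exact hx)
        have hfin : g ^ p ∈ N := ⟨k, by simp only; rw [hk, hx1, inv_one, one_mul]⟩
        rw [← map_pow, QuotientGroup.mk'_apply, QuotientGroup.eq_one_iff]
        exact hfin
      have hlt : Nat.card (G ⧸ N) ≤ n := by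
        have h2 := Subgroup.card_eq_card_quotient_mul_card_subgroup N
        have h3 : 1 < Nat.card N := (Subgroup.one_lt_card_iff_ne_bot N).mpr hNbot
        have h4 := Nat.card_pos (α := G ⧸ N)
        nlinarith
      obtain ⟨H', hH1, hH2⟩ := ih (G ⧸ N) hlt (X.map (QuotientGroup.mk' N)) hq
      exact step_pullback X N hXN H' hH1 hH2
    · push_neg at h1
      by_cases h2 : ∃ z : G, z ∉ X
      · obtain ⟨z, hz⟩ := h2
        have hz1 : z ≠ 1 := fun h => hz (h ▸ X.one_mem)
        have hordz : orderOf z = p := by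
          have := orderOf_dvd_of_pow_eq_one (h1 z)
          rcases (Nat.Prime.eq_one_or_self_of_dvd (Fact.out) _ this) with h | h
          · exact absurd (orderOf_eq_one_iff.mp h) hz1
          · exact h
        set N := Subgroup.zpowers z with hN
        have hNbot : N ≠ ⊥ := by
          intro h
          have hm := Subgroup.mem_zpowers z
          rw [← hN, h, Subgroup.mem_bot] at hm
          exact hz1 hm
        have hXN : X ⊓ N = ⊥ := by
          rw [eq_bot_iff]
          rintro g ⟨hgX, k, hk⟩
          simp only at hk
          rw [Subgroup.mem_bot]
          by_contra hg1
          -- then p does not divide k, so z ∈ X, contradiction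
          have hpk : ¬ ((p : ℤ) ∣ k) := by
            rintro ⟨m, rfl⟩
            apply hg1
            rw [← hk, zpow_mul, zpow_natCast, h1 z, one_zpow]
          have hprime : Prime (p : ℤ) := Nat.prime_iff_prime_int.mp Fact.out
          have hcop : IsCoprime (p : ℤ) k := (Prime.coprime_iff_not_dvd hprime).mpr hpk
          obtain ⟨a, b, hab⟩ := hcop
          apply hz
          have hzg : z = g ^ b := by
            calc z = z ^ (a * p + b * k) := by rw [hab, zpow_one]
            _ = (z ^ (p:ℤ)) ^ a * (z ^ k) ^ b := by
                rw [← zpow_mul, ← zpow_mul, ← zpow_add]; ring_nf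
            _ = g ^ b := by
                rw [hk, zpow_natCast, h1 z, one_zpow, one_mul]
          rw [hzg]
          exact Subgroup.zpow_mem X hgX b
        have hq : ∀ g : G ⧸ N, g ^ p ∈ X.map (QuotientGroup.mk' N) → g ^ p = 1 := by
          intro gq _
          obtain ⟨g, rfl⟩ := QuotientGroup.mk'_surjective N gq
          rw [← map_pow, h1 g, map_one]
        have hlt : Nat.card (G ⧸ N) ≤ n := by
          have h2 := Subgroup.card_eq_card_quotient_mul_card_subgroup N
          have h3 : 1 < Nat.card N := (Subgroup.one_lt_card_iff_ne_bot N).mpr hNbot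
          have h4 := Nat.card_pos (α := G ⧸ N)
          nlinarith
        obtain ⟨H', hH1, hH2⟩ := ih (G ⧸ N) hlt (X.map (QuotientGroup.mk' N)) hq
        exact step_pullback X N hXN H' hH1 hH2
      · push_neg at h2
        refine ⟨⊥, by simp, ?_⟩
        have : X = ⊤ := by
          rw [eq_top_iff]; intro g _; exact h2 g
        simp [this]


/-- In a finite abelian group `G`, a maximal cyclic subgroup `X` of order `p` of a Sylow
`p`-subgroup `P` has a complement in `G`. -/
theorem maximal_cyclic_complement {G : Type*} [CommGroup G] [Fintype G]
    (p : ℕ) [Fact p.Prime] (P : Sylow p G) (X : Subgroup G)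
    (hXP : X ≤ (P : Subgroup G)) (hX : Nat.card X = p)
    (hmax : ∀ Y : Subgroup G, Y ≤ (P : Subgroup G) → IsCyclic Y → X ≤ Y → Y = X) :
    ∃ H : Subgroup G, X ⊓ H = ⊥ ∧ X ⊔ H = ⊤ := by
  have hp : p.Prime := Fact.out
  have hpure : ∀ g : G, g ^ p ∈ X → g ^ p = 1 := by
    intro g hg
    by_contra hne
    -- every element of X has order dividing p
    have horddvd : ∀ y : G, y ∈ X → y ^ p = 1 := by
      intro y hy
      have : (⟨y, hy⟩ : X) ^ (Nat.card X) = 1 := pow_card_eq_one'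
      rw [hX] at this
      exact_mod_cast congrArg (Subgroup.subtype X) this
    have hgp2 : g ^ (p ^ 2) = 1 := by
      rw [pow_two, pow_mul]
      exact horddvd _ hg
    -- zpowers g is a p-group
    have hpg : IsPGroup p (Subgroup.zpowers g) := by
      intro q
      refine ⟨2, ?_⟩
      obtain ⟨y, k, hk⟩ := q
      simp only at hk
      ext
      push_cast
      rw [← hk, ← zpow_natCast (g ^ k) (p ^ 2), ← zpow_mul, mul_comm, zpow_mul,
        zpow_natCast, hgp2, one_zpow]
    obtain ⟨P', hgP'⟩ := hpg.exists_le_sylow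
    have hPnormal : (P : Subgroup G).Normal := inferInstance
    haveI : Unique (Sylow p G) := Sylow.unique_of_normal P hPnormal
    have hPP : P' = P := Subsingleton.elim _ _
    rw [hPP] at hgP'
    -- X = zpowers (g ^ p)
    have hle : Subgroup.zpowers (g ^ p) ≤ X := by
      rw [Subgroup.zpowers_le]
      exact hg
    have hcard : Nat.card (Subgroup.zpowers (g ^ p)) = p := by
      rw [Nat.card_zpowers]
      have hdvd : orderOf (g ^ p) ∣ p := orderOf_dvd_of_pow_eq_one (by
        rw [← pow_mul, ← pow_two]; exact hgp2)
      rcases (hp.eq_one_or_self_of_dvd _ hdvd) with h | h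
      · exact absurd (orderOf_eq_one_iff.mp h) hne
      · exact h
    have hXeq : Subgroup.zpowers (g ^ p) = X :=
      Subgroup.eq_of_le_of_card_ge hle (by rw [hcard, hX])
    -- X ≤ zpowers g
    have hXzg : X ≤ Subgroup.zpowers g := by
      rw [← hXeq, Subgroup.zpowers_le]
      exact Subgroup.pow_mem _ (Subgroup.mem_zpowers g) p
    have hcyc : IsCyclic (Subgroup.zpowers g) := by
      refine ⟨⟨⟨g, Subgroup.mem_zpowers g⟩, ?_⟩⟩
      rintro ⟨y, k, hk⟩
      simp only at hk
      exact ⟨k, by ext; push_cast; exact hk⟩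
    have := hmax (Subgroup.zpowers g) hgP' hcyc hXzg
    have hgX : g ∈ X := this ▸ Subgroup.mem_zpowers g
    exact hne (horddvd g hgX)
  exact aux_complement p (Nat.card G) G le_rfl X hpure
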